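/- Let $P_0,\dots,P_n$ be affinely independent in $\mathbb{R}^n$ and $X,Y$ two points each having all barycentric coordinates strictly positive. If for every $i\in\{0,\dots,n\}$ the points $P_i$, $X$, $Y$ are collinear, then $X=Y$. -/
import Mathlib


theorem interior_points_collinear_with_all_vertices_eq
    (n : ℕ) (hn : 2 ≤ n)
    (P : Fin (n + 1) → EuclideanSpace ℝ (Fin n))
    (hP : AffineIndependent ℝ P)
    (X Y : EuclideanSpace ℝ (Fin n))
    (α β : Fin (n + 1) → ℝ)
    (hαpos : ∀ i, 0 < α i) (hαsum : ∑ i, α i = 1) (hX : X = ∑ i, α i • P i)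
    (hβpos : ∀ i, 0 < β i) (hβsum : ∑ i, β i = 1) (hY : Y = ∑ i, β i • P i)
    (hcol : ∀ i, Collinear ℝ {P i, X, Y}) :
    X = Y := by
  by_contra hXY
  have hmem : ∀ i, P i ∈ line[ℝ, X, Y] := fun i =>
    (hcol i).mem_affineSpan_of_mem_of_ne
      (by simp) (by simp) (by simp) hXY
  have hcolr : Collinear ℝ (Set.range P) := by
    rw [collinear_iff_exists_forall_eq_smul_vadd]
    refine ⟨X, Y -ᵥ X, ?_⟩
    rintro p ⟨i, rfl⟩
    have hi : (P i -ᵥ X) +ᵥ X ∈ line[ℝ, X, Y] := by rw [vsub_vadd]; exact hmem i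
    obtain ⟨r, hr⟩ := vadd_left_mem_affineSpan_pair.1 hi
    exact ⟨r, by rw [hr, vsub_vadd]⟩
  have hrank := hP.finrank_vectorSpan (Fintype.card_fin _)
  have hle : Module.finrank ℝ (vectorSpan ℝ (Set.range P)) ≤ 1 :=
    hcolr.finrank_le_one
  omega
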